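/- arXiv:1308.5147 — 2 statements merged into one kernel-verified Lean document; each statement's English description precedes it below -/
import Mathlib

section
/- Let {s_n}_{n≥0} be a nonincreasing sequence of nonnegative reals with Σ s_n^p < ∞ for some p > 1, and define σ_n = (n+1)^{-1} Σ_{j=0}^n s_j. Then Σ_{n≥0} σ_n^p ≤ (p/(p−1))^p Σ_{n≥0} s_n^p (Hardy's inequality for nonincreasing sequences). -/
open Finset

private lemma hardy_pow_succ {p : ℝ} (hp : 1 < p) {x : ℝ} (hx : 0 ≤ x) :
    x ^ (p - 1) * x = x ^ p := by
  rw [← Real.rpow_add_one' hx (by linarith), sub_add_cancel]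

private lemma hardy_rpow_q {p : ℝ} (hp : 1 < p) {x : ℝ} (hx : 0 ≤ x) :
    (x ^ (p - 1)) ^ (p / (p - 1)) = x ^ p := by
  rw [← Real.rpow_mul hx]
  congr 1
  field_simp
  exact div_self (by linarith : p - 1 ≠ 0)

private lemma hardy_key {p : ℝ} (hp : 1 < p) {x y c : ℝ} (hx : 0 ≤ x) (hy : 0 ≤ y)
    (hc : 0 ≤ c) :
    x ^ p - p / (p - 1) * x ^ (p - 1) * ((c + 1) * x - c * y) ≤
      1 / (p - 1) * (c * y ^ p - (c + 1) * x ^ p) := by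
  have hp1 : (0:ℝ) < p - 1 := by linarith
  have hp0 : (0:ℝ) < p := by linarith
  have hpq : p.HolderConjugate (p / (p - 1)) := .conjExponent hp
  have hxx : x ^ (p - 1) * x = x ^ p := hardy_pow_succ hp hx
  have young : p * (y * x ^ (p - 1)) ≤ y ^ p + (p - 1) * x ^ p := by
    have h := Real.young_inequality_of_nonneg hy (Real.rpow_nonneg hx (p - 1)) hpq
    rw [hardy_rpow_q hp hx] at h
    have h2 : x ^ p / (p / (p - 1)) = (p - 1) * x ^ p / p := by
      rw [div_div_eq_mul_div]
      ring
    rw [h2] at h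
    calc p * (y * x ^ (p - 1)) ≤ p * (y ^ p / p + (p - 1) * x ^ p / p) :=
          mul_le_mul_of_nonneg_left h hp0.le
      _ = y ^ p + (p - 1) * x ^ p := by field_simp
  have hcy : c * (p * (y * x ^ (p - 1))) ≤ c * (y ^ p + (p - 1) * x ^ p) :=
    mul_le_mul_of_nonneg_left young hc
  rw [← mul_le_mul_iff_right₀ hp1]
  have e1 : (p - 1) * (x ^ p - p / (p - 1) * x ^ (p - 1) * ((c + 1) * x - c * y)) =
      (p - 1) * x ^ p - p * (c + 1) * (x ^ (p - 1) * x) + p * c * (y * x ^ (p - 1)) := by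
    field_simp
    ring
  have e2 : (p - 1) * (1 / (p - 1) * (c * y ^ p - (c + 1) * x ^ p)) =
      c * y ^ p - (c + 1) * x ^ p := by
    field_simp
  rw [e1, e2, hxx]
  nlinarith [hcy]

/-- Hardy's inequality for nonincreasing nonnegative sequences: if `∑ s_n^p < ∞`
with `p > 1` and `σ_n = (n+1)⁻¹ ∑_{j=0}^n s_j`, then
`∑ σ_n^p ≤ (p/(p−1))^p ∑ s_n^p`. -/
theorem hardy_inequality (p : ℝ) (hp : 1 < p) (s : ℕ → ℝ)
    (hnn : ∀ n, 0 ≤ s n) (hmono : Antitone s)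
    (hsum : Summable fun n => s n ^ p) :
    Summable (fun n : ℕ => ((∑ j ∈ Finset.range (n + 1), s j) / (n + 1)) ^ p) ∧
    ∑' n : ℕ, ((∑ j ∈ Finset.range (n + 1), s j) / (n + 1)) ^ p ≤
      (p / (p - 1)) ^ p * ∑' n : ℕ, s n ^ p := by
  have hp1 : (0:ℝ) < p - 1 := by linarith
  have hp0 : (0:ℝ) < p := by linarith
  have hpq : p.HolderConjugate (p / (p - 1)) := .conjExponent hp
  have hq0 : (0:ℝ) < p / (p - 1) := div_pos hp0 hp1
  set σ : ℕ → ℝ := fun n => (∑ j ∈ Finset.range n, s j) / n with hσ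
  have hσnn : ∀ n, 0 ≤ σ n := fun n =>
    div_nonneg (Finset.sum_nonneg fun j _ => hnn j) (Nat.cast_nonneg n)
  have hmul : ∀ n : ℕ, (n : ℝ) * σ n = ∑ j ∈ Finset.range n, s j := by
    intro n
    cases n with
    | zero => simp [hσ]
    | succ m =>
      have h0 : ((m+1 : ℕ) : ℝ) ≠ 0 := by positivity
      simp only [hσ]
      rw [mul_div_cancel₀]
      exact h0
  have hsk : ∀ n : ℕ, s n = ((n:ℝ) + 1) * σ (n + 1) - (n : ℝ) * σ n := by
    intro n
    have h1 := hmul (n+1)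
    have h2 := hmul n
    push_cast at h1
    rw [Finset.sum_range_succ] at h1
    linarith
  -- per-term inequality
  have key : ∀ n : ℕ, σ (n+1) ^ p - p / (p - 1) * σ (n+1) ^ (p - 1) * s n ≤
      1 / (p - 1) * ((n:ℝ) * σ n ^ p - ((n:ℝ) + 1) * σ (n+1) ^ p) := by
    intro n
    have h := hardy_key hp (hσnn (n+1)) (hσnn n) (Nat.cast_nonneg n : (0:ℝ) ≤ n)
    rw [hsk n]
    exact h
  -- summed inequality
  have sum_key : ∀ N : ℕ, ∑ n ∈ Finset.range N, σ (n+1) ^ p ≤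
      p / (p - 1) * ∑ n ∈ Finset.range N, σ (n+1) ^ (p - 1) * s n := by
    intro N
    have h1 : ∑ n ∈ Finset.range N, (σ (n+1) ^ p - p / (p - 1) * σ (n+1) ^ (p - 1) * s n) ≤
        ∑ n ∈ Finset.range N, (1 / (p - 1) *
          ((n:ℝ) * σ n ^ p - ((n:ℝ) + 1) * σ (n+1) ^ p)) :=
      Finset.sum_le_sum fun n _ => key n
    have h2 : ∑ n ∈ Finset.range N, (1 / (p - 1) *
        ((n:ℝ) * σ n ^ p - ((n:ℝ) + 1) * σ (n+1) ^ p)) =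
        1 / (p - 1) * ((0:ℝ) * σ 0 ^ p - (N:ℝ) * σ N ^ p) := by
      rw [← Finset.mul_sum]
      congr 1
      have h3 := Finset.sum_range_sub' (fun n : ℕ => (n:ℝ) * σ n ^ p) N
      rw [show ∑ n ∈ Finset.range N, ((n:ℝ) * σ n ^ p - ((n:ℝ) + 1) * σ (n+1) ^ p) =
          ∑ n ∈ Finset.range N, ((fun k : ℕ => (k:ℝ) * σ k ^ p) n -
            (fun k : ℕ => (k:ℝ) * σ k ^ p) (n+1)) from
        Finset.sum_congr rfl fun n _ => by push_cast; ring, h3]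
      push_cast
      ring
    rw [h2] at h1
    have h3 : 1 / (p - 1) * ((0:ℝ) * σ 0 ^ p - (N:ℝ) * σ N ^ p) ≤ 0 := by
      have hN : (0:ℝ) ≤ (N:ℝ) * σ N ^ p :=
        mul_nonneg (Nat.cast_nonneg N) (Real.rpow_nonneg (hσnn N) p)
      have h4 : (0:ℝ) ≤ 1 / (p - 1) := by positivity
      nlinarith
    have h5 : ∑ n ∈ Finset.range N, (σ (n+1) ^ p - p / (p - 1) * σ (n+1) ^ (p - 1) * s n) =
        (∑ n ∈ Finset.range N, σ (n+1) ^ p) -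
          p / (p - 1) * ∑ n ∈ Finset.range N, σ (n+1) ^ (p - 1) * s n := by
      rw [Finset.sum_sub_distrib, Finset.mul_sum]
      congr 1
      exact Finset.sum_congr rfl fun n _ => by ring
    rw [h5] at h1
    linarith
  -- Hölder
  set T : ℝ := ∑' n : ℕ, s n ^ p with hT
  have hTnn : 0 ≤ T := tsum_nonneg fun n => Real.rpow_nonneg (hnn n) p
  have hTle : ∀ N : ℕ, ∑ n ∈ Finset.range N, s n ^ p ≤ T := fun N =>
    Summable.sum_le_tsum _ (fun n _ => Real.rpow_nonneg (hnn n) p) hsum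
  have holder : ∀ N : ℕ, ∑ n ∈ Finset.range N, σ (n+1) ^ (p - 1) * s n ≤
      (∑ n ∈ Finset.range N, σ (n+1) ^ p) ^ (1 / (p / (p - 1))) * T ^ (1 / p) := by
    intro N
    have h := Real.inner_le_Lp_mul_Lq (Finset.range N)
      (fun n => σ (n+1) ^ (p - 1)) (fun n => s n) hpq.symm
    have e1 : ∑ n ∈ Finset.range N, |σ (n+1) ^ (p - 1)| ^ (p / (p - 1)) =
        ∑ n ∈ Finset.range N, σ (n+1) ^ p :=
      Finset.sum_congr rfl fun n _ => by
        rw [abs_of_nonneg (Real.rpow_nonneg (hσnn (n+1)) _), hardy_rpow_q hp (hσnn (n+1))]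
    have e2 : ∑ n ∈ Finset.range N, |s n| ^ p = ∑ n ∈ Finset.range N, s n ^ p :=
      Finset.sum_congr rfl fun n _ => by rw [abs_of_nonneg (hnn n)]
    rw [e1, e2] at h
    refine h.trans (mul_le_mul_of_nonneg_left
      (Real.rpow_le_rpow (Finset.sum_nonneg fun n _ => Real.rpow_nonneg (hnn n) p)
        (hTle N) (by positivity))
      (Real.rpow_nonneg (Finset.sum_nonneg fun n _ =>
        Real.rpow_nonneg (hσnn (n+1)) p) _))
  -- combine: partial sums bounded
  have bound : ∀ N : ℕ, ∑ n ∈ Finset.range N, σ (n+1) ^ p ≤ (p / (p - 1)) ^ p * T := by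
    intro N
    set S : ℝ := ∑ n ∈ Finset.range N, σ (n+1) ^ p with hS
    have hSnn : 0 ≤ S := Finset.sum_nonneg fun n _ => Real.rpow_nonneg (hσnn (n+1)) p
    rcases eq_or_lt_of_le hSnn with h0 | h0
    · rw [← h0]; positivity
    have main : S ≤ p / (p - 1) * (S ^ (1 / (p / (p - 1))) * T ^ (1 / p)) :=
      (sum_key N).trans (mul_le_mul_of_nonneg_left (holder N) hq0.le)
    have hsplit : S = S ^ (1 / (p / (p - 1))) * S ^ (1 / p) := by
      rw [← Real.rpow_add h0]
      rw [show 1 / (p / (p - 1)) + 1 / p = 1 by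
        rw [one_div_div]
        field_simp
        ring, Real.rpow_one]
    have hSq : 0 < S ^ (1 / (p / (p - 1))) := Real.rpow_pos_of_pos h0 _
    have hcancel : S ^ (1 / p) ≤ p / (p - 1) * T ^ (1 / p) := by
      have key2 : S ^ (1 / (p / (p - 1))) * S ^ (1 / p) ≤
          S ^ (1 / (p / (p - 1))) * (p / (p - 1) * T ^ (1 / p)) := by
        calc S ^ (1 / (p / (p - 1))) * S ^ (1 / p) = S := hsplit.symm
          _ ≤ p / (p - 1) * (S ^ (1 / (p / (p - 1))) * T ^ (1 / p)) := main
          _ = S ^ (1 / (p / (p - 1))) * (p / (p - 1) * T ^ (1 / p)) := by ring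
      exact le_of_mul_le_mul_left key2 hSq
    have hfin : (S ^ (1 / p)) ^ p ≤ (p / (p - 1) * T ^ (1 / p)) ^ p :=
      Real.rpow_le_rpow (Real.rpow_nonneg hSnn _) hcancel hp0.le
    have eS : (S ^ (1 / p)) ^ p = S := by
      rw [one_div, Real.rpow_inv_rpow hSnn hp0.ne']
    have eT : (p / (p - 1) * T ^ (1 / p)) ^ p = (p / (p - 1)) ^ p * T := by
      rw [Real.mul_rpow hq0.le (Real.rpow_nonneg hTnn _), one_div,
        Real.rpow_inv_rpow hTnn hp0.ne']
    rw [eS, eT] at hfin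
    exact hfin
  -- conclude
  have heq : ∀ n : ℕ, ((∑ j ∈ Finset.range (n + 1), s j) / ((n : ℝ) + 1)) ^ p =
      σ (n+1) ^ p := by
    intro n
    simp only [hσ]
    norm_num
  have hbnd : ∀ N : ℕ,
      ∑ n ∈ Finset.range N, ((∑ j ∈ Finset.range (n + 1), s j) / ((n : ℝ) + 1)) ^ p ≤
        (p / (p - 1)) ^ p * T := by
    intro N
    calc ∑ n ∈ Finset.range N, ((∑ j ∈ Finset.range (n + 1), s j) / ((n : ℝ) + 1)) ^ p
        = ∑ n ∈ Finset.range N, σ (n+1) ^ p := Finset.sum_congr rfl fun n _ => heq n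
      _ ≤ (p / (p - 1)) ^ p * T := bound N
  have hnn' : ∀ n : ℕ,
      0 ≤ ((∑ j ∈ Finset.range (n + 1), s j) / ((n : ℝ) + 1)) ^ p := fun n => by
    rw [heq n]; exact Real.rpow_nonneg (hσnn (n+1)) p
  exact ⟨summable_of_sum_range_le hnn' hbnd,
    Real.tsum_le_of_sum_range_le hnn' hbnd⟩
end

section
/- Let E₁ and E₂ be finite spectral decompositions: suppose P₁,…,P_N are pairwise orthogonal projections summing to the identity on a Hilbert space H, likewise Q₁,…,Q_M, and suppose Φ(i,j) = Σ_{r} φ_r(i)·ψ_r(j) with Σ_r (sup_i |φ_r(i)|)(sup_j |ψ_r(j)|) ≤ K. Then for every bounded operator T on H, ‖Σ_{i,j} Φ(i,j)·P_i T Q_j‖ ≤ K·‖T‖. -/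
open scoped InnerProductSpace

theorem pyth_aux {H : Type*} [NormedAddCommGroup H] [InnerProductSpace ℂ H]
    {n : ℕ} (f : Fin n → H) (h : ∀ i j, i ≠ j → ⟪f i, f j⟫_ℂ = 0) :
    ‖∑ i, f i‖^2 = ∑ i, ‖f i‖^2 := by
  have e : (‖∑ i, f i‖^2 : ℝ) = RCLike.re ⟪∑ i, f i, ∑ i, f i⟫_ℂ := by
    rw [inner_self_eq_norm_sq (𝕜 := ℂ)]
  rw [e, sum_inner, map_sum]
  refine Finset.sum_congr rfl fun i _ => ?_
  rw [inner_sum, Finset.sum_eq_single i]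
  · rw [inner_self_eq_norm_sq (𝕜 := ℂ)]
  · intro j _ hj; exact h i j (Ne.symm hj)
  · intro hi; exact absurd (Finset.mem_univ i) hi

theorem proj_norm_le {H : Type*} [NormedAddCommGroup H] [InnerProductSpace ℂ H]
    [CompleteSpace H] {n : ℕ} (P : Fin n → H →L[ℂ] H)
    (hsa : ∀ i, IsSelfAdjoint (P i))
    (horth : ∀ i i', i ≠ i' → P i ∘L P i' = 0)
    (hsum : ∑ i, P i = ContinuousLinearMap.id ℂ H)
    (c : Fin n → ℂ) (u : ℝ) (hu : 0 ≤ u) (hc : ∀ i, ‖c i‖ ≤ u) :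
    ‖∑ i, c i • P i‖ ≤ u := by
  refine ContinuousLinearMap.opNorm_le_bound _ hu fun x => ?_
  have horthx : ∀ (i i' : Fin n), i ≠ i' → ⟪P i x, P i' x⟫_ℂ = 0 := by
    intro i i' hii
    have h1 := ContinuousLinearMap.adjoint_inner_left (P i) (P i' x) x
    rw [(hsa i).adjoint_eq] at h1
    rw [h1]
    have : P i (P i' x) = (0 : H →L[ℂ] H) x := by
      rw [← horth i i' hii]; rfl
    rw [this]; simp
  have hxx : ∑ i, P i x = x := by
    rw [← ContinuousLinearMap.sum_apply, hsum]; rfl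
  have hx2 : ∑ i, ‖P i x‖^2 = ‖x‖^2 := by
    calc ∑ i, ‖P i x‖^2 = ‖∑ i, P i x‖^2 := (pyth_aux (fun i => P i x) horthx).symm
      _ = ‖x‖^2 := by rw [hxx]
  have key : ‖(∑ i, c i • P i) x‖^2 ≤ (u * ‖x‖)^2 := by
    have e1 : (∑ i, c i • P i) x = ∑ i, c i • P i x := by
      simp [ContinuousLinearMap.sum_apply]
    rw [e1, pyth_aux (fun i => c i • P i x) (by
      intro i j hij
      simp only [inner_smul_left, inner_smul_right, horthx i j hij, mul_zero])]
    calc ∑ i, ‖c i • P i x‖^2 ≤ ∑ i, u^2 * ‖P i x‖^2 := by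
          refine Finset.sum_le_sum fun i _ => ?_
          rw [norm_smul, mul_pow]
          exact mul_le_mul_of_nonneg_right
            (pow_le_pow_left₀ (norm_nonneg _) (hc i) 2) (by positivity)
      _ = u^2 * ∑ i, ‖P i x‖^2 := by rw [Finset.mul_sum]
      _ = (u * ‖x‖)^2 := by rw [hx2]; ring
  exact le_of_pow_le_pow_left₀ two_ne_zero (by positivity) key


/-- Schur multiplier bound for finite spectral decompositions: if `P_1, …, P_N` and
`Q_1, …, Q_M` are families of pairwise orthogonal (self-adjoint idempotent) projections
summing to the identity, and `Φ(i,j) = ∑_r φ_r(i) ψ_r(j)` with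
`∑_r ‖φ_r‖_∞ ‖ψ_r‖_∞ ≤ K`, then `‖∑_{i,j} Φ(i,j) P_i T Q_j‖ ≤ K ‖T‖`. -/
theorem schur_multiplier_bound {H : Type*} [NormedAddCommGroup H]
    [InnerProductSpace ℂ H] [CompleteSpace H]
    (N M : ℕ) (P : Fin N → H →L[ℂ] H) (Q : Fin M → H →L[ℂ] H)
    (hPsa : ∀ i, IsSelfAdjoint (P i))
    (hPidem : ∀ i, P i ∘L P i = P i)
    (hPorth : ∀ i i', i ≠ i' → P i ∘L P i' = 0)
    (hPsum : ∑ i, P i = ContinuousLinearMap.id ℂ H)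
    (hQsa : ∀ j, IsSelfAdjoint (Q j))
    (hQidem : ∀ j, Q j ∘L Q j = Q j)
    (hQorth : ∀ j j', j ≠ j' → Q j ∘L Q j' = 0)
    (hQsum : ∑ j, Q j = ContinuousLinearMap.id ℂ H)
    (Φ : Fin N → Fin M → ℂ) (K : ℝ)
    (φ : ℕ → Fin N → ℂ) (ψ : ℕ → Fin M → ℂ) (u v : ℕ → ℝ)
    (hu : ∀ r i, ‖φ r i‖ ≤ u r)
    (hv : ∀ r j, ‖ψ r j‖ ≤ v r)
    (huv : Summable fun r => u r * v r)
    (hK : ∑' r, u r * v r ≤ K)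
    (hrep : ∀ i j, Φ i j = ∑' r, φ r i * ψ r j)
    (T : H →L[ℂ] H) :
    ‖∑ i, ∑ j, Φ i j • (P i ∘L T ∘L Q j)‖ ≤ K * ‖T‖ := by
  -- degenerate cases: if N = 0 or M = 0, then H is a subsingleton
  by_cases htriv : Subsingleton H
  · have hS : (∑ i, ∑ j, Φ i j • (P i ∘L T ∘L Q j)) = 0 := Subsingleton.elim _ _
    have hT : T = 0 := Subsingleton.elim _ _
    rw [hS, hT]; simp
  have hNtriv : Nontrivial H := not_subsingleton_iff_nontrivial.mp htriv
  have hN : 0 < N := by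
    rcases Nat.eq_zero_or_pos N with h | h
    · exfalso
      subst h
      obtain ⟨x, hx⟩ := exists_ne (0 : H)
      apply hx
      have : (ContinuousLinearMap.id ℂ H) x = x := rfl
      rw [← hPsum] at this
      simpa using this.symm
    · exact h
  have hM : 0 < M := by
    rcases Nat.eq_zero_or_pos M with h | h
    · exfalso
      subst h
      obtain ⟨x, hx⟩ := exists_ne (0 : H)
      apply hx
      have : (ContinuousLinearMap.id ℂ H) x = x := rfl
      rw [← hQsum] at this
      simpa using this.symm
    · exact h
  have hu0 : ∀ r, 0 ≤ u r := fun r => (norm_nonneg _).trans (hu r ⟨0, hN⟩)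
  have hv0 : ∀ r, 0 ≤ v r := fun r => (norm_nonneg _).trans (hv r ⟨0, hM⟩)
  set A : ℕ → H →L[ℂ] H := fun r => ∑ i, φ r i • P i with hA
  set B : ℕ → H →L[ℂ] H := fun r => ∑ j, ψ r j • Q j with hB
  have hAn : ∀ r, ‖A r‖ ≤ u r := fun r =>
    proj_norm_le P hPsa hPorth hPsum (φ r) (u r) (hu0 r) (hu r)
  have hBn : ∀ r, ‖B r‖ ≤ v r := fun r =>
    proj_norm_le Q hQsa hQorth hQsum (ψ r) (v r) (hv0 r) (hv r)
  have hCle : ∀ r, ‖A r ∘L T ∘L B r‖ ≤ u r * v r * ‖T‖ := by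
    intro r
    calc ‖A r ∘L T ∘L B r‖ ≤ ‖A r‖ * ‖T ∘L B r‖ := ContinuousLinearMap.opNorm_comp_le _ _
      _ ≤ ‖A r‖ * (‖T‖ * ‖B r‖) := by
          exact mul_le_mul_of_nonneg_left (ContinuousLinearMap.opNorm_comp_le _ _)
            (norm_nonneg _)
      _ ≤ u r * (‖T‖ * v r) := by
          apply mul_le_mul (hAn r) (mul_le_mul_of_nonneg_left (hBn r) (norm_nonneg _))
            (by positivity) (hu0 r)
      _ = u r * v r * ‖T‖ := by ring
  have hCsum : Summable fun r => (A r ∘L T ∘L B r) := by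
    apply Summable.of_norm_bounded (huv.mul_right ‖T‖) hCle
  have hsΦ : ∀ (i : Fin N) (j : Fin M), Summable fun r => φ r i * ψ r j := by
    intro i j
    refine Summable.of_norm_bounded huv fun r => ?_
    rw [norm_mul]
    exact mul_le_mul (hu r i) (hv r j) (norm_nonneg _) (hu0 r)
  have hsX : ∀ (i : Fin N) (j : Fin M),
      Summable fun r => (φ r i * ψ r j) • (P i ∘L T ∘L Q j) :=
    fun i j => (hsΦ i j).smul_const _
  have comp_eq : ∀ r, (A r) ∘L T ∘L (B r)
      = ∑ i, ∑ j, (φ r i * ψ r j) • (P i ∘L T ∘L Q j) := by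
    intro r
    ext x
    simp only [hA, hB, ContinuousLinearMap.sum_apply, ContinuousLinearMap.coe_comp',
      Function.comp_apply, ContinuousLinearMap.smul_apply, map_sum, map_smul,
      Finset.smul_sum, smul_smul]
    rw [Finset.sum_comm]
    exact Finset.sum_congr rfl fun i _ => Finset.sum_congr rfl fun j _ => by
      rw [mul_comm]
  have key : (∑ i, ∑ j, Φ i j • (P i ∘L T ∘L Q j)) = ∑' r, (A r ∘L T ∘L B r) := by
    calc ∑ i, ∑ j, Φ i j • (P i ∘L T ∘L Q j)
        = ∑ i, ∑ j, ∑' r, (φ r i * ψ r j) • (P i ∘L T ∘L Q j) := by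
          refine Finset.sum_congr rfl fun i _ => Finset.sum_congr rfl fun j _ => ?_
          rw [hrep i j, (hsΦ i j).tsum_smul_const]
      _ = ∑' r, ∑ i, ∑ j, (φ r i * ψ r j) • (P i ∘L T ∘L Q j) := by
          rw [Summable.tsum_finsetSum fun i _ => summable_sum fun j _ => hsX i j]
          exact Finset.sum_congr rfl fun i _ => (Summable.tsum_finsetSum fun j _ => hsX i j).symm
      _ = ∑' r, (A r ∘L T ∘L B r) := by
          exact tsum_congr fun r => (comp_eq r).symm
  rw [key]
  calc ‖∑' r, (A r ∘L T ∘L B r)‖ ≤ ∑' r, ‖A r ∘L T ∘L B r‖ := by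
        apply norm_tsum_le_tsum_norm
        exact Summable.of_nonneg_of_le (fun r => norm_nonneg _) hCle (huv.mul_right ‖T‖)
    _ ≤ ∑' r, u r * v r * ‖T‖ := by
        apply Summable.tsum_le_tsum hCle
          (Summable.of_nonneg_of_le (fun r => norm_nonneg _) hCle (huv.mul_right ‖T‖))
          (huv.mul_right ‖T‖)
    _ = (∑' r, u r * v r) * ‖T‖ := tsum_mul_right
    _ ≤ K * ‖T‖ := mul_le_mul_of_nonneg_right hK (norm_nonneg _)
end
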